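/- Let n ≥ 1 and let p be a profile. If f : ℝ → M_n(ℝ) is differentiable with f′(t) = S(f(t)) for all t ∈ ℝ and f(0) has profile p, then f(t) has profile p for all t ∈ ℝ. -/

import Mathlib

open Matrix

attribute [local instance] Matrix.normedAddCommGroup Matrix.normedSpace

/-- A profile: a set of index pairs `(i,j)` with `j < i`, closed under moving
towards the diagonal. -/
def IsProfile {n : ℕ} (p : Set (Fin n × Fin n)) : Prop :=
  (∀ ij ∈ p, ij.2 < ij.1) ∧
  ∀ ij ∈ p, ∀ i' j' : Fin n, j' < i' → i' ≤ ij.1 → ij.2 ≤ j' → (i', j') ∈ p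

/-- `M` has profile `p` if all its strictly lower triangular entries outside `p` vanish. -/
def HasProfile {n : ℕ} (M : Matrix (Fin n) (Fin n) ℝ) (p : Set (Fin n × Fin n)) : Prop :=
  ∀ i j : Fin n, j < i → (i, j) ∉ p → M i j = 0

/-- The upper triangular part `π_u(M)` of the decomposition of `M` into a
skew-symmetric plus an upper triangular matrix. -/
def piu {n : ℕ} (M : Matrix (Fin n) (Fin n) ℝ) : Matrix (Fin n) (Fin n) ℝ :=
  Matrix.of fun i j => if i < j then M i j + M j i else if i = j then M i j else 0

/-- The vector field `S(X) = [X, π_u([X, Xᵀ])]`. -/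
def Svf {n : ℕ} (X : Matrix (Fin n) (Fin n) ℝ) : Matrix (Fin n) (Fin n) ℝ :=
  X * piu (X * Xᵀ - Xᵀ * X) - piu (X * Xᵀ - Xᵀ * X) * X

open scoped Classical

namespace Stmt19

variable {n : ℕ}

/-- The set of "bad" index pairs: strictly lower triangular and outside the profile. -/
def Bad (p : Set (Fin n × Fin n)) : Set (Fin n × Fin n) := {ij | ij.2 < ij.1 ∧ ij ∉ p}

/-- Projection onto the bad entries. -/
noncomputable def Pmat (p : Set (Fin n × Fin n)) (M : Matrix (Fin n) (Fin n) ℝ) :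
    Matrix (Fin n) (Fin n) ℝ :=
  Matrix.of fun i j => if (i, j) ∈ Bad p then M i j else 0

lemma Pmat_apply (p : Set (Fin n × Fin n)) (M : Matrix (Fin n) (Fin n) ℝ) (i j : Fin n) :
    Pmat p M i j = if (i, j) ∈ Bad p then M i j else 0 := rfl

lemma Pmat_apply_of_bad {p : Set (Fin n × Fin n)} (M : Matrix (Fin n) (Fin n) ℝ)
    {i j : Fin n} (h : (i, j) ∈ Bad p) : Pmat p M i j = M i j := if_pos h

lemma bad_left {p : Set (Fin n × Fin n)} (hp : IsProfile p) {i j k : Fin n}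
    (hij : (i, j) ∈ Bad p) (hk : k ≤ j) : (i, k) ∈ Bad p := by
  obtain ⟨hlt, hnp⟩ := hij
  exact ⟨lt_of_le_of_lt hk hlt, fun hmem => hnp (hp.2 (i, k) hmem i j hlt le_rfl hk)⟩

lemma bad_right {p : Set (Fin n × Fin n)} (hp : IsProfile p) {i j k : Fin n}
    (hij : (i, j) ∈ Bad p) (hk : i ≤ k) : (k, j) ∈ Bad p := by
  obtain ⟨hlt, hnp⟩ := hij
  exact ⟨lt_of_lt_of_le hlt hk, fun hmem => hnp (hp.2 (k, j) hmem i j hlt hk le_rfl)⟩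

lemma piu_apply_of_lt (M : Matrix (Fin n) (Fin n) ℝ) {i j : Fin n} (h : j < i) :
    piu M i j = 0 := by
  simp only [piu, Matrix.of_apply]
  rw [if_neg (by omega), if_neg (by omega)]

lemma mul_entry_le (P Q : Matrix (Fin n) (Fin n) ℝ) (i j : Fin n) :
    ‖(P * Q) i j‖ ≤ n * (‖P‖ * ‖Q‖) := by
  rw [Matrix.mul_apply]
  refine (norm_sum_le _ _).trans ?_
  calc ∑ k, ‖P i k * Q k j‖ ≤ ∑ _k : Fin n, ‖P‖ * ‖Q‖ := by
        refine Finset.sum_le_sum fun k _ => ?_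
        rw [norm_mul]
        exact mul_le_mul (Matrix.norm_entry_le_entrywise_sup_norm P)
          (Matrix.norm_entry_le_entrywise_sup_norm Q) (norm_nonneg _) (norm_nonneg _)
    _ = n * (‖P‖ * ‖Q‖) := by simp [Finset.sum_const, Finset.card_univ, nsmul_eq_mul]

lemma norm_comm_le (X : Matrix (Fin n) (Fin n) ℝ) :
    ‖X * Xᵀ - Xᵀ * X‖ ≤ 2 * n * ‖X‖ ^ 2 := by
  have hT : ‖Xᵀ‖ = ‖X‖ := Matrix.norm_transpose X
  rw [Matrix.norm_le_iff (by positivity)]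
  intro i j
  rw [Matrix.sub_apply]
  calc ‖(X * Xᵀ) i j - (Xᵀ * X) i j‖ ≤ ‖(X * Xᵀ) i j‖ + ‖(Xᵀ * X) i j‖ := norm_sub_le _ _
    _ ≤ n * (‖X‖ * ‖Xᵀ‖) + n * (‖Xᵀ‖ * ‖X‖) := add_le_add (mul_entry_le _ _ _ _) (mul_entry_le _ _ _ _)
    _ = 2 * n * ‖X‖ ^ 2 := by rw [hT]; ring

lemma norm_piu_le (M : Matrix (Fin n) (Fin n) ℝ) : ‖piu M‖ ≤ 2 * ‖M‖ := by
  rw [Matrix.norm_le_iff (by positivity)]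
  intro i j
  have h1 := Matrix.norm_entry_le_entrywise_sup_norm M (i := i) (j := j)
  have h2 := Matrix.norm_entry_le_entrywise_sup_norm M (i := j) (j := i)
  simp only [piu, Matrix.of_apply]
  split_ifs
  · exact (norm_add_le _ _).trans (by linarith)
  · linarith [norm_nonneg M]
  · simp only [norm_zero]; positivity

/-- The key estimate: the projection of the vector field onto the bad entries is
bounded linearly by the projection of the matrix itself. -/
lemma key {p : Set (Fin n × Fin n)} (hp : IsProfile p) (X : Matrix (Fin n) (Fin n) ℝ) :
    ‖Pmat p (Svf X)‖ ≤ 8 * n ^ 2 * ‖X‖ ^ 2 * ‖Pmat p X‖ := by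
  set A := piu (X * Xᵀ - Xᵀ * X) with hAdef
  have hA : ‖A‖ ≤ 4 * n * ‖X‖ ^ 2 := by
    have := norm_piu_le (X * Xᵀ - Xᵀ * X)
    have := norm_comm_le X
    rw [hAdef]; linarith
  rw [Matrix.norm_le_iff (by positivity)]
  intro i j
  by_cases hb : (i, j) ∈ Bad p
  · rw [Pmat_apply_of_bad _ hb]
    have hSvf : Svf X i j = (∑ k, X i k * A k j) - ∑ k, A i k * X k j := by
      simp [Svf, Matrix.sub_apply, Matrix.mul_apply, hAdef]
    have hbound1 : ∀ k : Fin n, ‖X i k * A k j‖ ≤ 4 * n * ‖X‖ ^ 2 * ‖Pmat p X‖ := by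
      intro k
      by_cases hk : k ≤ j
      · have hbad := bad_left hp hb hk
        have hx : ‖X i k‖ ≤ ‖Pmat p X‖ := by
          rw [← Pmat_apply_of_bad X hbad]
          exact Matrix.norm_entry_le_entrywise_sup_norm _
        have ha : ‖A k j‖ ≤ 4 * n * ‖X‖ ^ 2 :=
          (Matrix.norm_entry_le_entrywise_sup_norm A).trans hA
        calc ‖X i k * A k j‖ = ‖X i k‖ * ‖A k j‖ := norm_mul _ _
          _ ≤ ‖Pmat p X‖ * (4 * n * ‖X‖ ^ 2) :=
            mul_le_mul hx ha (norm_nonneg _) (norm_nonneg _)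
          _ = 4 * n * ‖X‖ ^ 2 * ‖Pmat p X‖ := by ring
      · have hz : A k j = 0 := piu_apply_of_lt _ (lt_of_not_ge hk)
        rw [hz, mul_zero, norm_zero]
        positivity
    have hbound2 : ∀ k : Fin n, ‖A i k * X k j‖ ≤ 4 * n * ‖X‖ ^ 2 * ‖Pmat p X‖ := by
      intro k
      by_cases hk : i ≤ k
      · have hbad := bad_right hp hb hk
        have hx : ‖X k j‖ ≤ ‖Pmat p X‖ := by
          rw [← Pmat_apply_of_bad X hbad]
          exact Matrix.norm_entry_le_entrywise_sup_norm _
        have ha : ‖A i k‖ ≤ 4 * n * ‖X‖ ^ 2 :=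
          (Matrix.norm_entry_le_entrywise_sup_norm A).trans hA
        calc ‖A i k * X k j‖ = ‖A i k‖ * ‖X k j‖ := norm_mul _ _
          _ ≤ 4 * n * ‖X‖ ^ 2 * ‖Pmat p X‖ :=
            mul_le_mul ha hx (norm_nonneg _) (by positivity)
      · have hz : A i k = 0 := piu_apply_of_lt _ (lt_of_not_ge hk)
        rw [hz, zero_mul, norm_zero]
        positivity
    calc ‖Svf X i j‖ ≤ ‖∑ k, X i k * A k j‖ + ‖∑ k, A i k * X k j‖ := by
          rw [hSvf]; exact norm_sub_le _ _
      _ ≤ (∑ k, ‖X i k * A k j‖) + ∑ k, ‖A i k * X k j‖ :=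
          add_le_add (norm_sum_le _ _) (norm_sum_le _ _)
      _ ≤ (∑ _k : Fin n, 4 * n * ‖X‖ ^ 2 * ‖Pmat p X‖) +
          ∑ _k : Fin n, 4 * n * ‖X‖ ^ 2 * ‖Pmat p X‖ :=
          add_le_add (Finset.sum_le_sum fun k _ => hbound1 k)
            (Finset.sum_le_sum fun k _ => hbound2 k)
      _ = 8 * n ^ 2 * ‖X‖ ^ 2 * ‖Pmat p X‖ := by
          simp [Finset.sum_const, Finset.card_univ, nsmul_eq_mul]; ring
  · rw [Pmat_apply, if_neg hb, norm_zero]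
    positivity

/-- The projection as a continuous linear map. -/
noncomputable def PmatCLM (p : Set (Fin n × Fin n)) :
    Matrix (Fin n) (Fin n) ℝ →L[ℝ] Matrix (Fin n) (Fin n) ℝ :=
  LinearMap.mkContinuous
    { toFun := Pmat p
      map_add' := fun M N => by
        ext i j
        simp only [Pmat, Matrix.of_apply, Matrix.add_apply]
        split_ifs <;> simp
      map_smul' := fun c M => by
        ext i j
        simp only [Pmat, Matrix.of_apply, Matrix.smul_apply, RingHom.id_apply]
        split_ifs <;> simp }
    1
    (fun M => by
      rw [one_mul]
      rw [Matrix.norm_le_iff (norm_nonneg _)]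
      intro i j
      show ‖Pmat p M i j‖ ≤ ‖M‖
      rw [Pmat_apply]
      split_ifs
      · exact Matrix.norm_entry_le_entrywise_sup_norm _
      · simp)

lemma PmatCLM_apply (p : Set (Fin n × Fin n)) (M : Matrix (Fin n) (Fin n) ℝ) :
    PmatCLM p M = Pmat p M := rfl

/-- Grönwall argument: if the projection vanishes at time 0 it vanishes for all t ≥ 0. -/
lemma aux {p : Set (Fin n × Fin n)}
    (f d : ℝ → Matrix (Fin n) (Fin n) ℝ)
    (hd : ∀ t, HasDerivAt f (d t) t)
    (hb : ∀ t, ‖Pmat p (d t)‖ ≤ 8 * n ^ 2 * ‖f t‖ ^ 2 * ‖Pmat p (f t)‖)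
    (h0 : Pmat p (f 0) = 0) (t : ℝ) (ht : 0 ≤ t) : Pmat p (f t) = 0 := by
  have hfc : ContinuousOn f (Set.Icc 0 t) :=
    (continuous_iff_continuousAt.2 fun s => (hd s).continuousAt).continuousOn
  obtain ⟨C, hC⟩ := (isCompact_Icc : IsCompact (Set.Icc (0:ℝ) t)).exists_bound_of_continuousOn hfc
  set C' : ℝ := max C 0 with hC'def
  have hC' : ∀ s ∈ Set.Icc (0:ℝ) t, ‖f s‖ ≤ C' := fun s hs => (hC s hs).trans (le_max_left _ _)
  set K : ℝ := 8 * n ^ 2 * C' ^ 2 with hKdef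
  set g : ℝ → Matrix (Fin n) (Fin n) ℝ := fun s => Pmat p (f s) with hgdef
  have hg : ∀ s, HasDerivAt g (Pmat p (d s)) s := fun s => by
    have := ((PmatCLM p).hasFDerivAt (x := f s)).comp_hasDerivAt s (hd s)
    exact this
  have hgle := norm_le_gronwallBound_of_norm_deriv_right_le
    (f := g) (f' := fun s => Pmat p (d s)) (δ := 0) (K := K) (ε := 0) (a := 0) (b := t)
    ((continuous_iff_continuousAt.2 fun s => (hg s).continuousAt).continuousOn)
    (fun x _ => (hg x).hasDerivWithinAt)
    (by rw [hgdef]; simp [h0])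
    (fun x hx => by
      rw [add_zero]
      refine (hb x).trans ?_
      have hfx : ‖f x‖ ≤ C' := hC' x (Set.mem_Icc_of_Ico hx)
      have h1 : ‖f x‖ ^ 2 ≤ C' ^ 2 := by
        have : (0:ℝ) ≤ C' := le_max_right _ _
        nlinarith [norm_nonneg (f x)]
      have : (8 : ℝ) * n ^ 2 * ‖f x‖ ^ 2 ≤ 8 * n ^ 2 * C' ^ 2 := by nlinarith
      exact mul_le_mul_of_nonneg_right this (norm_nonneg _))
  have := hgle t (Set.mem_Icc.2 ⟨ht, le_rfl⟩)
  rw [show gronwallBound (0:ℝ) K 0 (t - 0) = 0 by simp [gronwallBound]] at this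
  exact norm_le_zero_iff.mp this

end Stmt19

theorem stmt_19 (n : ℕ) (hn : 1 ≤ n) (p : Set (Fin n × Fin n)) (hp : IsProfile p)
    (f : ℝ → Matrix (Fin n) (Fin n) ℝ)
    (hf : ∀ t : ℝ, HasDerivAt f (Svf (f t)) t)
    (h0 : HasProfile (f 0) p) :
    ∀ t : ℝ, HasProfile (f t) p := by
  have h0' : Stmt19.Pmat p (f 0) = 0 := by
    ext i j
    rw [Stmt19.Pmat_apply]
    split_ifs with h
    · exact h0 i j h.1 h.2
    · rfl
  have main : ∀ t : ℝ, Stmt19.Pmat p (f t) = 0 := by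
    intro t
    rcases le_total 0 t with ht | ht
    · exact Stmt19.aux f (fun s => Svf (f s)) hf (fun s => Stmt19.key hp (f s)) h0' t ht
    · have hneg : ∀ s : ℝ, HasDerivAt (fun u : ℝ => f (-u)) (-Svf (f (-s))) s := by
        intro s
        have h1 : HasDerivAt (fun u : ℝ => -u) (-1 : ℝ) s := (hasDerivAt_id s).neg
        have := (hf (-s)).scomp s h1
        simp at this
        exact this
      have hb2 : ∀ s : ℝ, ‖Stmt19.Pmat p (-Svf (f (-s)))‖ ≤
          8 * n ^ 2 * ‖f (-s)‖ ^ 2 * ‖Stmt19.Pmat p (f (-s))‖ := by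
        intro s
        have : Stmt19.Pmat p (-Svf (f (-s))) = -(Stmt19.Pmat p (Svf (f (-s)))) := by
          rw [← Stmt19.PmatCLM_apply, ← Stmt19.PmatCLM_apply, map_neg]
        rw [this, norm_neg]
        exact Stmt19.key hp (f (-s))
      have := Stmt19.aux (fun u => f (-u)) (fun s => -Svf (f (-s))) hneg hb2
        (by simpa using h0') (-t) (by linarith)
      simpa using this
  intro t i j hij hnp
  have := congrFun (congrFun (main t) i) j
  rwa [Stmt19.Pmat_apply_of_bad _ ⟨hij, hnp⟩] at this
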